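/- Let E₁ : H(ℝ^d) → ℝ^d be the endpoint map on the Cameron–Martin space with the α-inner product, and E₁* its adjoint. Then E₁E₁* = S(1)(∫₀¹ (S(s)*S(s))⁻¹ ds)S(1)*, which is an invertible (positive definite) matrix. -/

import Mathlib

open Matrix
open scoped Matrix.Norms.L2Operator

/-- The linear map `A ↦ A *ᵥ u` as a continuous linear map. -/
noncomputable def mulVecCLM {d : ℕ} (u : Fin d → ℝ) :
    Matrix (Fin d) (Fin d) ℝ →L[ℝ] (Fin d → ℝ) :=
  LinearMap.toContinuousLinearMap
    { toFun := fun A => A *ᵥ u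
      map_add' := fun A B => Matrix.add_mulVec A B u
      map_smul' := fun c A => Matrix.smul_mulVec c A u }

@[simp] lemma mulVecCLM_apply {d : ℕ} (u : Fin d → ℝ) (A : Matrix (Fin d) (Fin d) ℝ) :
    mulVecCLM u A = A *ᵥ u := rfl

/-- Solutions of the linear ODE `S' = -αS`, `S 0 = 1`, are invertible matrices. -/
lemma aux_isUnit {d : ℕ} (α S : ℝ → Matrix (Fin d) (Fin d) ℝ)
    (hα : ContinuousOn α (Set.Icc (0 : ℝ) 1))
    (hS : ∀ t ∈ Set.Icc (0 : ℝ) 1,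
      HasDerivWithinAt S (-(α t * S t)) (Set.Icc (0 : ℝ) 1) t)
    (hS0 : S 0 = 1) :
    ∀ t ∈ Set.Icc (0 : ℝ) 1, IsUnit (S t) := by
  obtain ⟨C, hC⟩ := isCompact_Icc.exists_bound_of_continuousOn hα
  -- the bundled `mulVecLin` as a continuous linear map in the matrix argument
  let Φ : Matrix (Fin d) (Fin d) ℝ →L[ℝ] ((Fin d → ℝ) →L[ℝ] (Fin d → ℝ)) :=
    LinearMap.toContinuousLinearMap
      { toFun := fun A => LinearMap.toContinuousLinearMap (Matrix.mulVecLin A)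
        map_add' := by
          intro A B; ext x; simp [Matrix.add_mulVec]
        map_smul' := by
          intro c A; ext x; simp [Matrix.smul_mulVec] }
  have hΦ : ∀ A x, Φ A x = A *ᵥ x := fun A x => rfl
  set K : NNReal := (‖Φ‖ * C).toNNReal with hK
  set v : ℝ → (Fin d → ℝ) → (Fin d → ℝ) :=
    fun t x => if t ∈ Set.Icc (0 : ℝ) 1 then -(α t *ᵥ x) else 0 with hv_def
  have hv : ∀ t, LipschitzWith K (v t) := by
    intro t
    by_cases ht : t ∈ Set.Icc (0 : ℝ) 1
    · have h1 : v t = ⇑(-(Φ (α t))) := by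
        funext x
        show (if t ∈ Set.Icc (0 : ℝ) 1 then -(α t *ᵥ x) else 0) = _
        rw [if_pos ht, ContinuousLinearMap.neg_apply, hΦ]
      rw [h1]
      refine ((-(Φ (α t))).lipschitz).weaken ?_
      have h2 : ‖-(Φ (α t))‖ ≤ ‖Φ‖ * C := by
        rw [norm_neg]
        calc ‖Φ (α t)‖ ≤ ‖Φ‖ * ‖α t‖ := Φ.le_opNorm _
        _ ≤ ‖Φ‖ * C := by
            exact mul_le_mul_of_nonneg_left (hC t ht) (norm_nonneg Φ)
      rw [← NNReal.coe_le_coe]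
      calc (‖-(Φ (α t))‖₊ : ℝ) = ‖-(Φ (α t))‖ := rfl
      _ ≤ ‖Φ‖ * C := h2
      _ ≤ ((‖Φ‖ * C).toNNReal : ℝ) := Real.le_coe_toNNReal _
    · have h1 : v t = fun _ => (0 : Fin d → ℝ) := by
        funext x
        show (if t ∈ Set.Icc (0 : ℝ) 1 then -(α t *ᵥ x) else 0) = _
        rw [if_neg ht]
      rw [h1]
      exact (LipschitzWith.const _).weaken zero_le
  intro t₀ ht₀
  rw [← Matrix.mulVec_injective_iff_isUnit]
  have key : ∀ u : Fin d → ℝ, S t₀ *ᵥ u = 0 → u = 0 := by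
    intro u hu
    set f : ℝ → (Fin d → ℝ) := fun t => S t *ᵥ u with hf_def
    have hScont : ContinuousOn S (Set.Icc (0 : ℝ) 1) :=
      fun t ht => (hS t ht).continuousWithinAt
    have hsub : Set.Icc (0 : ℝ) t₀ ⊆ Set.Icc (0 : ℝ) 1 :=
      Set.Icc_subset_Icc le_rfl ht₀.2
    have hfc : ContinuousOn f (Set.Icc (0 : ℝ) t₀) :=
      (mulVecCLM u).continuous.comp_continuousOn (hScont.mono hsub)
    have hf' : ∀ t ∈ Set.Ioc (0 : ℝ) t₀,
        HasDerivWithinAt f (v t (f t)) (Set.Iic t) t := by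
      intro t ht
      have ht1 : t ∈ Set.Icc (0 : ℝ) 1 := ⟨ht.1.le, ht.2.trans ht₀.2⟩
      have h1 := ((mulVecCLM u).hasFDerivAt (x := S t)).comp_hasDerivWithinAt t (hS t ht1)
      have hmem : Set.Icc (0 : ℝ) 1 ∈ nhdsWithin t (Set.Iic t) := by
        rw [mem_nhdsWithin]
        exact ⟨Set.Ioi 0, isOpen_Ioi, ht.1,
          fun x hx => ⟨hx.1.le, hx.2.trans (ht.2.trans ht₀.2)⟩⟩
      have h2 := h1.mono_of_mem_nhdsWithin hmem
      have h3 : v t (f t) = mulVecCLM u (-(α t * S t)) := by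
        show (if t ∈ Set.Icc (0 : ℝ) 1 then -(α t *ᵥ (S t *ᵥ u)) else 0) = _
        rw [if_pos ht1, mulVecCLM_apply, Matrix.neg_mulVec, Matrix.mulVec_mulVec]
      rw [h3]
      exact h2
    have hg' : ∀ t ∈ Set.Ioc (0 : ℝ) t₀,
        HasDerivWithinAt (fun _ : ℝ => (0 : Fin d → ℝ))
          (v t ((fun _ : ℝ => (0 : Fin d → ℝ)) t)) (Set.Iic t) t := by
      intro t ht
      have : v t (0 : Fin d → ℝ) = 0 := by
        show (if t ∈ Set.Icc (0 : ℝ) 1 then -(α t *ᵥ (0 : Fin d → ℝ)) else 0) = 0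
        by_cases h : t ∈ Set.Icc (0 : ℝ) 1 <;>
          simp only [if_pos, if_neg, h, Matrix.mulVec_zero, neg_zero, if_true, if_false]
      rw [this]
      exact hasDerivWithinAt_const _ _ _
    have heq := ODE_solution_unique_of_mem_Icc_left
      (v := v) (s := fun _ => Set.univ) (K := K)
      (fun t _ => (hv t).lipschitzOnWith)
      hfc hf' (fun _ _ => trivial)
      continuousOn_const hg' (fun _ _ => trivial)
      hu
    have h0 : f 0 = 0 := heq ⟨le_rfl, ht₀.1⟩
    rw [hf_def] at h0
    simpa [hS0] using h0
  intro x y hxy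
  have h1 : S t₀ *ᵥ (x - y) = 0 := by
    rw [Matrix.mulVec_sub]
    simpa [sub_eq_zero] using hxy
  have := key _ h1
  exact sub_eq_zero.mp this

/-- With `(E₁* a) t = S t (∫₀ᵗ (SᴴS)⁻¹)(S 1)ᴴ a`, the composition `E₁ E₁*` is the matrix
`Q = S 1 (∫₀¹ ((S s)ᴴ S s)⁻¹ ds) (S 1)ᴴ`, which is positive definite, hence invertible. -/
theorem stmt8 {d : ℕ} (α S : ℝ → Matrix (Fin d) (Fin d) ℝ)
    (hα : ContinuousOn α (Set.Icc (0 : ℝ) 1))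
    (hS : ∀ t ∈ Set.Icc (0 : ℝ) 1,
      HasDerivWithinAt S (-(α t * S t)) (Set.Icc (0 : ℝ) 1) t)
    (hS0 : S 0 = 1)
    (Q : Matrix (Fin d) (Fin d) ℝ)
    (hQ : Q = S 1 * (∫ s in (0 : ℝ)..1, ((S s)ᴴ * S s)⁻¹) * (S 1)ᴴ) :
    (∀ a : Fin d → ℝ,
        S 1 *ᵥ ((∫ s in (0 : ℝ)..1, ((S s)ᴴ * S s)⁻¹) *ᵥ ((S 1)ᴴ *ᵥ a)) = Q *ᵥ a) ∧
      Q.PosDef ∧ IsUnit Q := by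
  have hSu := aux_isUnit α S hα hS hS0
  have hScont : ContinuousOn S (Set.Icc (0 : ℝ) 1) :=
    fun t ht => (hS t ht).continuousWithinAt
  set g : ℝ → Matrix (Fin d) (Fin d) ℝ := fun s => ((S s)ᴴ * S s)⁻¹ with hg_def
  set M : Matrix (Fin d) (Fin d) ℝ := ∫ s in (0 : ℝ)..1, g s with hM_def
  -- continuity of s ↦ (S s)ᴴ * S s
  have hAc : ContinuousOn (fun s => (S s)ᴴ * S s) (Set.Icc (0 : ℝ) 1) := by
    have h1 : Continuous (fun A : Matrix (Fin d) (Fin d) ℝ => Aᴴ * A) :=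
      Continuous.matrix_mul (continuous_id.matrix_conjTranspose) continuous_id
    exact h1.comp_continuousOn hScont
  -- positive definiteness of (S s)ᴴ * S s
  have hApd : ∀ s ∈ Set.Icc (0 : ℝ) 1, ((S s)ᴴ * S s).PosDef := by
    intro s hs
    refine Matrix.PosDef.of_dotProduct_mulVec_pos (Matrix.posSemidef_conjTranspose_mul_self (S s)).1 ?_
    intro x hx
    have hy : S s *ᵥ x ≠ 0 := by
      intro h
      apply hx
      have hinj := Matrix.mulVec_injective_iff_isUnit.mpr (hSu s hs)
      have : S s *ᵥ x = S s *ᵥ 0 := by simpa [Matrix.mulVec_zero] using h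
      exact hinj this
    have h1 : star x ⬝ᵥ (((S s)ᴴ * S s) *ᵥ x) = (S s *ᵥ x) ⬝ᵥ (S s *ᵥ x) := by
      rw [star_trivial, ← Matrix.mulVec_mulVec, Matrix.dotProduct_mulVec,
        Matrix.conjTranspose_eq_transpose_of_trivial, Matrix.vecMul_transpose]
    rw [h1]
    have := Matrix.dotProduct_self_star_pos_iff.mpr hy
    simpa using this
  -- determinant is nonzero, so the inverse is continuous
  have hdet : ∀ s ∈ Set.Icc (0 : ℝ) 1, det ((S s)ᴴ * S s) ≠ 0 :=
    fun s hs => (hApd s hs).det_pos.ne'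
  have hgc : ContinuousOn g (Set.Icc (0 : ℝ) 1) := by
    have h1 : ContinuousOn
        (fun s => (det ((S s)ᴴ * S s))⁻¹ • adjugate ((S s)ᴴ * S s))
        (Set.Icc (0 : ℝ) 1) := by
      refine ContinuousOn.fun_smul ?_ ?_
      · exact ((continuous_id.matrix_det).comp_continuousOn hAc).inv₀ hdet
      · exact (continuous_id.matrix_adjugate).comp_continuousOn hAc
    refine h1.congr fun s hs => ?_
    show ((S s)ᴴ * S s)⁻¹ = _
    rw [Matrix.inv_def, Ring.inverse_eq_inv']
  have hgi : IntervalIntegrable g MeasureTheory.volume 0 1 := by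
    apply ContinuousOn.intervalIntegrable
    rwa [Set.uIcc_of_le (by norm_num : (0:ℝ) ≤ 1)]
  have hgpd : ∀ s ∈ Set.Icc (0 : ℝ) 1, (g s).PosDef :=
    fun s hs => (hApd s hs).inv
  -- M is positive definite
  have hMpd : M.PosDef := by
    refine Matrix.PosDef.of_dotProduct_mulVec_pos ?_ ?_
    · -- Hermitian
      let T : Matrix (Fin d) (Fin d) ℝ →L[ℝ] Matrix (Fin d) (Fin d) ℝ :=
        LinearMap.toContinuousLinearMap
          (Matrix.transposeLinearEquiv (Fin d) (Fin d) ℝ ℝ).toLinearMap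
      have hT : ∀ A : Matrix (Fin d) (Fin d) ℝ, T A = Aᵀ := fun A => rfl
      have h1 : T M = ∫ s in (0 : ℝ)..1, T (g s) :=
        (T.intervalIntegral_comp_comm hgi).symm
      have h2 : (∫ s in (0 : ℝ)..1, T (g s)) = ∫ s in (0 : ℝ)..1, g s := by
        apply intervalIntegral.integral_congr
        intro s hs
        rw [Set.uIcc_of_le (by norm_num : (0:ℝ) ≤ 1)] at hs
        have := (hgpd s hs).isHermitian
        rw [Matrix.IsHermitian, Matrix.conjTranspose_eq_transpose_of_trivial] at this
        exact this
      show Mᴴ = M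
      rw [Matrix.conjTranspose_eq_transpose_of_trivial, ← hT M, h1, h2]
    · intro x hx
      let φ : Matrix (Fin d) (Fin d) ℝ →L[ℝ] ℝ :=
        LinearMap.toContinuousLinearMap
          { toFun := fun A => x ⬝ᵥ (A *ᵥ x)
            map_add' := by intro A B; simp [Matrix.add_mulVec, dotProduct_add]
            map_smul' := by intro c A; simp [Matrix.smul_mulVec, dotProduct_smul] }
      have hφ : ∀ A, φ A = x ⬝ᵥ (A *ᵥ x) := fun A => rfl
      have h1 : φ M = ∫ s in (0 : ℝ)..1, φ (g s) := (φ.intervalIntegral_comp_comm hgi).symm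
      have h2 : (0:ℝ) < ∫ s in (0 : ℝ)..1, φ (g s) := by
        apply intervalIntegral.intervalIntegral_pos_of_pos_on
        · apply ContinuousOn.intervalIntegrable
          rw [Set.uIcc_of_le (by norm_num : (0:ℝ) ≤ 1)]
          exact φ.continuous.comp_continuousOn hgc
        · intro s hs
          have hs' : s ∈ Set.Icc (0 : ℝ) 1 := ⟨hs.1.le, hs.2.le⟩
          have := (hgpd s hs').dotProduct_mulVec_pos hx
          rw [star_trivial] at this
          simpa [hφ] using this
        · norm_num
      have h3 : star x ⬝ᵥ (M *ᵥ x) = φ M := by rw [star_trivial, hφ]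
      rw [h3, h1]
      exact h2
  have h1mem : (1 : ℝ) ∈ Set.Icc (0 : ℝ) 1 := ⟨zero_le_one, le_rfl⟩
  have hQpd : Q.PosDef := by
    rw [hQ]
    refine Matrix.PosDef.of_dotProduct_mulVec_pos ?_ ?_
    · show (S 1 * M * (S 1)ᴴ)ᴴ = S 1 * M * (S 1)ᴴ
      rw [Matrix.conjTranspose_mul, Matrix.conjTranspose_mul,
        Matrix.conjTranspose_conjTranspose, hMpd.1.eq, Matrix.mul_assoc]
    · intro x hx
      have hy : (S 1)ᴴ *ᵥ x ≠ 0 := by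
        intro h
        apply hx
        have hu : IsUnit ((S 1)ᴴ) := by
          rw [Matrix.conjTranspose_eq_transpose_of_trivial, Matrix.isUnit_transpose]
          exact hSu 1 h1mem
        have hinj := Matrix.mulVec_injective_iff_isUnit.mpr hu
        have : (S 1)ᴴ *ᵥ x = (S 1)ᴴ *ᵥ 0 := by simpa [Matrix.mulVec_zero] using h
        exact hinj this
      have h1 : star x ⬝ᵥ ((S 1 * M * (S 1)ᴴ) *ᵥ x)
          = ((S 1)ᴴ *ᵥ x) ⬝ᵥ (M *ᵥ ((S 1)ᴴ *ᵥ x)) := by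
        rw [star_trivial, ← Matrix.mulVec_mulVec, ← Matrix.mulVec_mulVec,
          Matrix.dotProduct_mulVec (v := x),
          Matrix.conjTranspose_eq_transpose_of_trivial, ← Matrix.mulVec_transpose]
      rw [h1]
      have := hMpd.dotProduct_mulVec_pos hy
      rwa [star_trivial] at this
  refine ⟨?_, hQpd, hQpd.isUnit⟩
  intro a
  rw [hQ, ← Matrix.mulVec_mulVec, ← Matrix.mulVec_mulVec]
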